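/- Relational diversity rank functions can fail submodularity: there exist a three-element set M = {v₁, v₂, v₃} and a nonempty finite set X of functions from M to ℕ such that the relational diversity rank function rk_X induced by X satisfies rk_X({v₁,v₂,v₃}) + rk_X({v₂}) > rk_X({v₁,v₂}) + rk_X({v₂,v₃}). (For instance, the team X consisting of the five assignments (v₁,v₂,v₃) ↦ (1,1,1), (1,1,2), (2,1,1), (1,2,1), (2,1,2) has 5·2 = 10 > 9 = 3·3 for the corresponding counts of distinct restrictions.) -/
import Mathlib

/-- The relational diversity rank induced by a team `X` of assignments `α → β`:
`rk_X(x) = log₂ |{s↾x : s ∈ X}|`. -/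
noncomputable def relRank {α : Type*} {β : Type*} (X : Finset (α → β)) (x : Finset α) : ℝ :=
  Real.logb 2 (Set.ncard ((↑x : Set α).restrict '' (↑X : Set (α → β))))

lemma relRank_eq_card {α β : Type*} [DecidableEq α] [DecidableEq β] (X : Finset (α → β))
    (x : Finset α) :
    relRank X x = Real.logb 2 ((X.image (Set.restrict (↑x : Set α))).card) := by
  rw [relRank, ← Finset.coe_image, Set.ncard_coe_finset]

/-- Relational diversity rank functions can fail submodularity: for the three variables
`0, 1, 2` (playing the roles of `v₁, v₂, v₃`) there is a team `X` with
`rk_X({v₁,v₂,v₃}) + rk_X({v₂}) > rk_X({v₁,v₂}) + rk_X({v₂,v₃})`. -/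
theorem relRank_not_submodular :
    ∃ X : Finset (Fin 3 → ℕ), X.Nonempty ∧
      relRank X ({0, 1, 2} : Finset (Fin 3)) + relRank X ({1} : Finset (Fin 3)) >
        relRank X ({0, 1} : Finset (Fin 3)) + relRank X ({1, 2} : Finset (Fin 3)) := by
  refine ⟨{![1,1,1], ![1,1,2], ![2,1,1], ![1,2,1], ![2,1,2]}, ⟨![1,1,1], by simp⟩, ?_⟩
  rw [relRank_eq_card, relRank_eq_card, relRank_eq_card, relRank_eq_card]
  have h1 : (({![1,1,1], ![1,1,2], ![2,1,1], ![1,2,1], ![2,1,2]} : Finset (Fin 3 → ℕ)).image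
      (Set.restrict (↑({0,1,2} : Finset (Fin 3)) : Set (Fin 3)))).card = 5 := by decide
  have h2 : (({![1,1,1], ![1,1,2], ![2,1,1], ![1,2,1], ![2,1,2]} : Finset (Fin 3 → ℕ)).image
      (Set.restrict (↑({1} : Finset (Fin 3)) : Set (Fin 3)))).card = 2 := by decide
  have h3 : (({![1,1,1], ![1,1,2], ![2,1,1], ![1,2,1], ![2,1,2]} : Finset (Fin 3 → ℕ)).image
      (Set.restrict (↑({0,1} : Finset (Fin 3)) : Set (Fin 3)))).card = 3 := by decide
  have h4 : (({![1,1,1], ![1,1,2], ![2,1,1], ![1,2,1], ![2,1,2]} : Finset (Fin 3 → ℕ)).image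
      (Set.restrict (↑({1,2} : Finset (Fin 3)) : Set (Fin 3)))).card = 3 := by decide
  rw [h1, h2, h3, h4]
  push_cast
  rw [← Real.logb_mul (by norm_num) (by norm_num), ← Real.logb_mul (by norm_num) (by norm_num)]
  exact Real.logb_lt_logb (by norm_num) (by norm_num) (by norm_num)
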